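/- Let X be a separable Fréchet space (a complete metrizable locally convex topological vector space) and let T be a continuous linear operator on X. If T is chaotic, then T is AP_b-hypercyclic. -/

import Mathlib

/-- A set `A ⊆ ℕ` belongs to the family `AP_b` if it contains arbitrarily long
arithmetic progressions with some fixed common difference `k ≥ 1`. -/
def APb (A : Set ℕ) : Prop :=
  ∃ k : ℕ, 1 ≤ k ∧ ∀ m : ℕ, ∃ a : ℕ, ∀ j : ℕ, j ≤ m → a + j * k ∈ A

/-- Let `X` be a separable Fréchet space (complete metrizable locally
convex topological vector space) and `T` a continuous linear operator on `X`.
If `T` is chaotic (hypercyclic with dense periodic points), then `T` is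
`AP_b`-hypercyclic. -/
theorem chaotic_implies_APb_hypercyclic
    {X : Type*} [AddCommGroup X] [Module ℝ X] [UniformSpace X] [IsUniformAddGroup X]
    [ContinuousSMul ℝ X] [LocallyConvexSpace ℝ X] [CompleteSpace X]
    [Filter.IsCountablyGenerated (uniformity X)] [T2Space X]
    [TopologicalSpace.SeparableSpace X]
    (T : X →L[ℝ] X)
    (hHC : ∃ x : X, Dense (Set.range fun n : ℕ => (T ^ n) x))
    (hPer : Dense {x : X | ∃ n : ℕ, 1 ≤ n ∧ (T ^ n) x = x}) :
    ∃ x : X, ∀ U : Set X, IsOpen U → U.Nonempty → APb {n : ℕ | (T ^ n) x ∈ U} := by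
  obtain ⟨x, hx⟩ := hHC
  refine ⟨x, fun U hU hUne => ?_⟩
  -- pick a periodic point p ∈ U with period k
  obtain ⟨p, ⟨k, hk1, hpk⟩, hpU⟩ := hPer.exists_mem_open hU hUne
  -- p is fixed by T^(j*k) for all j
  have hfix : ∀ j : ℕ, (T ^ (j * k)) p = p := by
    intro j
    induction j with
    | zero => simp
    | succ j ih =>
      have : T ^ ((j + 1) * k) = T ^ (j * k) * T ^ k := by
        rw [← pow_add]; ring_nf
      rw [this]
      simp [hpk, ih]
  refine ⟨k, hk1, fun m => ?_⟩
  -- the set of points whose first m+1 k-step iterates stay in U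
  set W : Set X := ⋂ j ∈ Finset.range (m + 1), (T ^ (j * k)) ⁻¹' U with hW
  have hWopen : IsOpen W := by
    apply isOpen_biInter_finset
    intro j _
    exact hU.preimage (T ^ (j * k)).continuous
  have hpW : p ∈ W := by
    simp only [hW, Set.mem_iInter, Set.mem_preimage]
    intro j _
    rw [hfix j]; exact hpU
  obtain ⟨y, ⟨a, rfl⟩, hyW⟩ := hx.exists_mem_open hWopen ⟨p, hpW⟩
  refine ⟨a, fun j hj => ?_⟩
  have hmem : (T ^ a) x ∈ (T ^ (j * k)) ⁻¹' U := by
    simp only [hW, Set.mem_iInter] at hyW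
    exact hyW j (Finset.mem_range.mpr (Nat.lt_succ_of_le hj))
  have : T ^ (a + j * k) = T ^ (j * k) * T ^ a := by
    rw [← pow_add]; ring_nf
  rw [Set.mem_setOf_eq, this]; exact hmem
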